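/- Let N be a finite player set, (ω,Σ) a weight system on N, and (N,v) a TU-game. If (N,v) is (ω,Σ)-convex, then its (ω,Σ)-weighted Shapley value Φ^ω(v) belongs to the core of (N,v). -/

import Mathlib

open Finset

variable {α : Type*}

noncomputable section

/-- `ω̄^S_i`: the weight of `i` if `i` belongs to the top-priority part `S̄` of `S`, else `0`.
Here the ordered partition `Σ` is encoded by the priority function `p`. -/
def wbar [DecidableEq α] (ω : α → ℝ) (p : α → ℕ) (S : Finset α) (i : α) : ℝ :=
  if i ∈ S ∧ p i = S.sup p then ω i else 0

/-- `ω̄^S = ∑_{i ∈ S̄} ω_i`. -/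
def wbarSum [DecidableEq α] (ω : α → ℝ) (p : α → ℕ) (S : Finset α) : ℝ :=
  ∑ i ∈ S, wbar ω p S i

/-- `(ω,Σ)`-convexity of a TU-game `v`. -/
def WConvex [DecidableEq α] (ω : α → ℝ) (p : α → ℕ) (v : Finset α → ℝ) : Prop :=
  ∀ S T : Finset α, S ⊂ T →
    0 ≤ ∑ i ∈ S, wbar ω p T i * (v T - v (T.erase i) - v S + v (S.erase i))

/-- unanimity coefficients `λ_S(v)` (Harsanyi dividends). -/
def unanimityCoeff [DecidableEq α] (v : Finset α → ℝ) (S : Finset α) : ℝ :=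
  ∑ T ∈ S.powerset, (-1 : ℝ) ^ (S.card - T.card) * v T

/-- `(ω,Σ)`-weighted Shapley value of player `i` for the game `v` with ground coalition `M`
(note that `wbar ω p S i = 0` unless `i ∈ S̄`). -/
def wShapley [DecidableEq α] (ω : α → ℝ) (p : α → ℕ) (v : Finset α → ℝ)
    (M : Finset α) (i : α) : ℝ :=
  ∑ S ∈ M.powerset, wbar ω p S i / wbarSum ω p S * unanimityCoeff v S

/-- membership in the core of the TU-game `v`. -/
def InCore [Fintype α] (v : Finset α → ℝ) (x : α → ℝ) : Prop :=
  (∑ i, x i) = v Finset.univ ∧ ∀ S : Finset α, v S ≤ ∑ i ∈ S, x i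

section aux
set_option linter.unusedSectionVars false
variable [DecidableEq α] (ω : α → ℝ) (p : α → ℕ) (v : Finset α → ℝ)

lemma sum_unanimity (v : Finset α → ℝ) (T : Finset α) :
    ∑ S ∈ T.powerset, unanimityCoeff v S = v T := by
  unfold unanimityCoeff
  have h1 : ∀ S ∈ T.powerset, ∑ U ∈ S.powerset, (-1 : ℝ) ^ (S.card - U.card) * v U
      = ∑ U ∈ T.powerset, if U ⊆ S then (-1 : ℝ) ^ (S.card - U.card) * v U else 0 := by
    intro S hS
    rw [mem_powerset] at hS
    rw [← Finset.sum_filter]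
    apply Finset.sum_congr
    · ext U; simp [mem_powerset, mem_filter]
      exact fun h => h.trans hS
    · intros; rfl
  rw [Finset.sum_congr rfl h1, Finset.sum_comm]
  have h2 : ∀ U ∈ T.powerset,
      (∑ S ∈ T.powerset, if U ⊆ S then (-1 : ℝ) ^ (S.card - U.card) * v U else 0)
      = (if U = T then 1 else 0) * v U := by
    intro U hU
    rw [mem_powerset] at hU
    rw [← Finset.sum_filter]
    have key : ∑ S ∈ T.powerset.filter (fun S => U ⊆ S), (-1 : ℝ) ^ (S.card - U.card)
        = if U = T then 1 else 0 := by
      rw [Finset.sum_nbij' (i := fun S => S \ U) (j := fun R => R ∪ U)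
        (t := (T \ U).powerset) (g := fun R => (-1 : ℝ) ^ R.card)]
      · have := @Finset.sum_powerset_neg_one_pow_card α _ (T \ U)
        have hcast : ∑ m ∈ (T \ U).powerset, (-1 : ℝ) ^ m.card
            = ((∑ m ∈ (T \ U).powerset, (-1 : ℤ) ^ m.card : ℤ) : ℝ) := by push_cast; ring_nf
        rw [hcast, this]
        by_cases h : U = T <;> simp [h, Finset.sdiff_eq_empty_iff_subset]
        · intro h2; exact h (subset_antisymm hU h2)
      · intro S hS; simp only [mem_filter, mem_powerset] at hS
        rw [mem_powerset]; exact sdiff_subset_sdiff hS.1 (le_refl _)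
      · intro R hR; rw [mem_powerset] at hR
        simp only [mem_filter, mem_powerset]
        constructor
        · exact union_subset (hR.trans (sdiff_subset)) hU
        · exact subset_union_right
      · intro S hS; simp only [mem_filter, mem_powerset] at hS
        exact sdiff_union_of_subset hS.2
      · intro R hR; rw [mem_powerset] at hR
        rw [union_sdiff_right]
        exact sdiff_eq_self_iff_disjoint.mpr (disjoint_of_subset_left hR Finset.sdiff_disjoint)
      · intro S hS; simp only [mem_filter, mem_powerset] at hS
        rw [card_sdiff_of_subset hS.2]
    calc ∑ S ∈ T.powerset.filter (fun S => U ⊆ S), (-1 : ℝ) ^ (S.card - U.card) * v U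
        = (∑ S ∈ T.powerset.filter (fun S => U ⊆ S), (-1 : ℝ) ^ (S.card - U.card)) * v U := by
          rw [Finset.sum_mul]
      _ = _ := by rw [key]
  rw [Finset.sum_congr rfl h2]
  simp only [ite_mul, one_mul, zero_mul]
  rw [Finset.sum_ite_eq' T.powerset T v]
  simp
lemma wbar_nonneg (hω : ∀ i, 0 < ω i) (S : Finset α) (i : α) : 0 ≤ wbar ω p S i := by
  unfold wbar; split <;> [exact (hω i).le; rfl]

lemma wbarSum_pos (hω : ∀ i, 0 < ω i) {S : Finset α} (hS : S.Nonempty) :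
    0 < wbarSum ω p S := by
  obtain ⟨i, hi, hsup⟩ := Finset.exists_mem_eq_sup S hS p
  refine Finset.sum_pos' (fun j _ => wbar_nonneg ω p hω S j) ⟨i, hi, ?_⟩
  unfold wbar; rw [if_pos ⟨hi, hsup.symm⟩]; exact hω i

lemma wbar_key {S T : Finset α} (hST : S ⊆ T) {i : α} (hiS : i ∈ S) :
    wbar ω p S i * (∑ j ∈ S, wbar ω p T j) = wbar ω p T i * wbarSum ω p S := by
  by_cases hsup : S.sup p = T.sup p
  · have h1 : ∀ j ∈ S, wbar ω p T j = wbar ω p S j := by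
      intro j hj; unfold wbar
      by_cases h : p j = S.sup p
      · rw [if_pos ⟨hST hj, hsup ▸ h⟩, if_pos ⟨hj, h⟩]
      · rw [if_neg, if_neg]
        · exact fun hc => h hc.2
        · exact fun hc => h (hsup ▸ hc.2)
    rw [Finset.sum_congr rfl h1, h1 i hiS]
    unfold wbarSum; ring
  · have hlt : S.sup p < T.sup p :=
      lt_of_le_of_ne (Finset.sup_mono hST) hsup
    have h1 : ∀ j ∈ S, wbar ω p T j = 0 := by
      intro j hj; unfold wbar
      rw [if_neg]
      rintro ⟨-, hc⟩
      exact absurd (hc ▸ Finset.le_sup hj) (not_le.mpr hlt)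
    rw [Finset.sum_congr rfl h1, h1 i hiS]
    simp

lemma coeff_key (hω : ∀ i, 0 < ω i) {S T : Finset α} (hST : S ⊆ T) (hT : T.Nonempty) (i : α) :
    ∑ j ∈ T, wbar ω p T j / wbarSum ω p T *
      (if j = i then (if i ∈ S then (1:ℝ) else 0) else (if j ∈ S then 0 else wbar ω p S i / wbarSum ω p S))
      = wbar ω p S i / wbarSum ω p S := by
  have hW : (0:ℝ) < wbarSum ω p T := wbarSum_pos ω p hω hT
  by_cases hiS : i ∈ S
  · have hiT : i ∈ T := hST hiS
    have hSne : (0:ℝ) < wbarSum ω p S := wbarSum_pos ω p hω ⟨i, hiS⟩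
    set f := wbar ω p S i / wbarSum ω p S with hf
    set W := wbarSum ω p T with hWdef
    rw [← Finset.add_sum_erase _ _ hiT]
    rw [if_pos rfl, if_pos hiS]
    have h2 : ∀ j ∈ T.erase i, wbar ω p T j / W *
        (if j = i then (1:ℝ) else (if j ∈ S then 0 else f))
        = (if j ∈ S then 0 else wbar ω p T j) / W * f := by
      intro j hj
      rw [if_neg (Finset.ne_of_mem_erase hj)]
      by_cases h : j ∈ S <;> simp [h]
    rw [Finset.sum_congr rfl h2]
    have h3 : ∑ j ∈ T.erase i, (if j ∈ S then 0 else wbar ω p T j) / W * f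
        = (∑ j ∈ T.erase i, (if j ∈ S then 0 else wbar ω p T j)) / W * f := by
      rw [← Finset.sum_mul, ← Finset.sum_div]
    rw [h3]
    have h4 : ∑ j ∈ T.erase i, (if j ∈ S then (0:ℝ) else wbar ω p T j)
        = W - ∑ j ∈ S, wbar ω p T j := by
      have : ∑ j ∈ T, (if j ∈ S then (0:ℝ) else wbar ω p T j)
          = W - ∑ j ∈ S, wbar ω p T j := by
        have e1 : ∑ j ∈ T, (if j ∈ S then (0:ℝ) else wbar ω p T j)
            = ∑ j ∈ T, (wbar ω p T j - if j ∈ S then wbar ω p T j else 0) := by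
          apply Finset.sum_congr rfl; intro j _; by_cases h : j ∈ S <;> simp [h]
        rw [e1, Finset.sum_sub_distrib, Finset.sum_ite_mem,
          Finset.inter_eq_right.mpr hST]
        rfl
      rw [← this, ← Finset.add_sum_erase _ _ hiT, if_pos hiS, zero_add]
    rw [h4]
    set A := ∑ j ∈ S, wbar ω p T j with hA
    have hfA : f * A = wbar ω p T i := by
      rw [hf, div_mul_eq_mul_div, wbar_key ω p hST hiS, mul_div_assoc,
        div_self (ne_of_gt hSne), mul_one]
    field_simp
    nlinarith [hfA]
  · have h0 : wbar ω p S i = 0 := by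
      unfold wbar; rw [if_neg]; exact fun hc => hiS hc.1
    rw [h0, zero_div]
    apply Finset.sum_eq_zero
    intro j hj
    simp [hiS]

lemma erase_powerset_sum (F : Finset α → ℝ) (j : α) (T : Finset α) :
    ∑ S ∈ (T.erase j).powerset, F S = ∑ S ∈ T.powerset, if j ∈ S then 0 else F S := by
  have : (T.erase j).powerset = T.powerset.filter (fun S => j ∉ S) := by
    ext S; simp [Finset.subset_erase, and_comm]
  rw [this, Finset.sum_filter]
  apply Finset.sum_congr rfl
  intro S _
  by_cases h : j ∈ S <;> simp [h]

lemma marg_eq (T : Finset α) {i : α} (hi : i ∈ T) :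
    v T - v (T.erase i) = ∑ S ∈ T.powerset, (if i ∈ S then (1:ℝ) else 0) * unanimityCoeff v S := by
  conv_lhs => rw [← sum_unanimity v T, ← sum_unanimity v (T.erase i)]
  rw [erase_powerset_sum, ← Finset.sum_sub_distrib]
  apply Finset.sum_congr rfl
  intro S _
  by_cases h : i ∈ S <;> simp [h]

lemma wShapley_rec (hω : ∀ i, 0 < ω i) {T : Finset α} (hT : T.Nonempty) (i : α) :
    wShapley ω p v T i = ∑ j ∈ T, wbar ω p T j / wbarSum ω p T *
      (if j = i then v T - v (T.erase i) else wShapley ω p v (T.erase j) i) := by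
  have step : ∀ j ∈ T, (if j = i then v T - v (T.erase i) else wShapley ω p v (T.erase j) i)
      = ∑ S ∈ T.powerset, (if j = i then (if i ∈ S then (1:ℝ) else 0)
          else (if j ∈ S then 0 else wbar ω p S i / wbarSum ω p S)) * unanimityCoeff v S := by
    intro j hj
    by_cases h : j = i
    · rw [if_pos h]
      subst h
      rw [marg_eq v T hj]
      apply Finset.sum_congr rfl
      intro S _
      rw [if_pos rfl]
    · rw [if_neg h]
      unfold wShapley
      rw [erase_powerset_sum]
      apply Finset.sum_congr rfl
      intro S _
      rw [if_neg h]
      by_cases hS : j ∈ S <;> simp [hS]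
  rw [Finset.sum_congr rfl (fun j hj => by rw [step j hj])]
  simp only [Finset.mul_sum]
  rw [Finset.sum_comm]
  unfold wShapley
  apply Finset.sum_congr rfl
  intro S hS
  rw [Finset.mem_powerset] at hS
  have key := coeff_key ω p hω hS hT i
  symm
  calc ∑ j ∈ T, wbar ω p T j / wbarSum ω p T *
        ((if j = i then (if i ∈ S then (1:ℝ) else 0)
          else (if j ∈ S then 0 else wbar ω p S i / wbarSum ω p S)) * unanimityCoeff v S)
      = (∑ j ∈ T, wbar ω p T j / wbarSum ω p T *
        (if j = i then (if i ∈ S then (1:ℝ) else 0)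
          else (if j ∈ S then 0 else wbar ω p S i / wbarSum ω p S))) * unanimityCoeff v S := by
        rw [Finset.sum_mul]
        apply Finset.sum_congr rfl
        intro j _
        ring
    _ = wbar ω p S i / wbarSum ω p S * unanimityCoeff v S := by rw [key]

lemma eff (hω : ∀ i, 0 < ω i) (hv : v ∅ = 0) :
    ∀ T : Finset α, ∑ i ∈ T, wShapley ω p v T i = v T := by
  intro T
  induction T using Finset.strongInduction with
  | _ T ih =>
    rcases T.eq_empty_or_nonempty with rfl | hT
    · simp [hv]
    · have hW := wbarSum_pos ω p hω hT
      rw [Finset.sum_congr rfl (fun i _ => wShapley_rec ω p v hω hT i), Finset.sum_comm]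
      have inner : ∀ j ∈ T, (∑ i ∈ T, wbar ω p T j / wbarSum ω p T *
          (if j = i then v T - v (T.erase i) else wShapley ω p v (T.erase j) i))
          = wbar ω p T j / wbarSum ω p T * v T := by
        intro j hj
        rw [← Finset.mul_sum]
        congr 1
        rw [← Finset.add_sum_erase _ _ hj, if_pos rfl]
        have h1 : ∀ i ∈ T.erase j,
            (if j = i then v T - v (T.erase i) else wShapley ω p v (T.erase j) i)
            = wShapley ω p v (T.erase j) i := by
          intro i hi; rw [if_neg (Finset.ne_of_mem_erase hi).symm]
        rw [Finset.sum_congr rfl h1, ih (T.erase j) (Finset.erase_ssubset hj)]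
        ring
      rw [Finset.sum_congr rfl inner, ← Finset.sum_mul]
      have : (∑ j ∈ T, wbar ω p T j / wbarSum ω p T) = 1 := by
        rw [← Finset.sum_div]
        exact div_self (ne_of_gt hW)
      rw [this, one_mul]

lemma core_ineq (hω : ∀ i, 0 < ω i) (hv : v ∅ = 0) (hconv : WConvex ω p v) :
    ∀ T S : Finset α, S ⊆ T → v S ≤ ∑ i ∈ S, wShapley ω p v T i := by
  intro T
  induction T using Finset.strongInduction with
  | _ T ih =>
    intro S hST
    rcases hST.ssubset_or_eq with hss | rfl
    · obtain ⟨x, hxT, hxS⟩ := Finset.exists_of_ssubset hss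
      have hT : T.Nonempty := ⟨x, hxT⟩
      have hW := wbarSum_pos ω p hω hT
      rw [Finset.sum_congr rfl (fun i _ => wShapley_rec ω p v hω hT i), Finset.sum_comm]
      have inner : ∀ j ∈ T, (∑ i ∈ S, wbar ω p T j / wbarSum ω p T *
          (if j = i then v T - v (T.erase i) else wShapley ω p v (T.erase j) i))
          = wbar ω p T j / wbarSum ω p T *
            ((if j ∈ S then v T - v (T.erase j) else 0) + ∑ i ∈ S.erase j, wShapley ω p v (T.erase j) i) := by
        intro j hj
        rw [← Finset.mul_sum]
        congr 1
        by_cases hjS : j ∈ S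
        · rw [← Finset.add_sum_erase _ _ hjS, if_pos rfl, if_pos hjS]
          congr 1
          apply Finset.sum_congr rfl
          intro i hi; rw [if_neg (Finset.ne_of_mem_erase hi).symm]
        · rw [if_neg hjS, zero_add, Finset.erase_eq_of_notMem hjS]
          apply Finset.sum_congr rfl
          intro i hi
          rw [if_neg (fun h => hjS (by rw [h]; exact hi))]
      rw [Finset.sum_congr rfl inner]
      have step2 : ∑ j ∈ T, wbar ω p T j / wbarSum ω p T *
            ((if j ∈ S then v T - v (T.erase j) else 0) + v (S.erase j))
          ≤ ∑ j ∈ T, wbar ω p T j / wbarSum ω p T *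
            ((if j ∈ S then v T - v (T.erase j) else 0) + ∑ i ∈ S.erase j, wShapley ω p v (T.erase j) i) := by
        apply Finset.sum_le_sum
        intro j hj
        apply mul_le_mul_of_nonneg_left _ (div_nonneg (wbar_nonneg ω p hω T j) hW.le)
        apply add_le_add le_rfl
        exact ih (T.erase j) (Finset.erase_ssubset hj) (S.erase j)
          (Finset.erase_subset_erase j hST)
      refine le_trans ?_ step2
      -- v S ≤ ∑ j ∈ T, wbar T j / W * ((if j∈S then vT - v(T\j) else 0) + v (S.erase j))
      have expand : ∑ j ∈ T, wbar ω p T j / wbarSum ω p T *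
            ((if j ∈ S then v T - v (T.erase j) else 0) + v (S.erase j))
          = (∑ j ∈ T, wbar ω p T j *
            ((if j ∈ S then v T - v (T.erase j) else 0) + v (S.erase j))) / wbarSum ω p T := by
        rw [Finset.sum_div]
        apply Finset.sum_congr rfl
        intro j _; ring
      rw [expand, le_div_iff₀ hW]
      have key : ∑ j ∈ T, wbar ω p T j *
            ((if j ∈ S then v T - v (T.erase j) else 0) + v (S.erase j))
          - v S * wbarSum ω p T
          = ∑ i ∈ S, wbar ω p T i * (v T - v (T.erase i) - v S + v (S.erase i)) := by
        unfold wbarSum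
        rw [Finset.mul_sum, ← Finset.sum_sub_distrib]
        have e1 : ∀ j ∈ T, wbar ω p T j *
              ((if j ∈ S then v T - v (T.erase j) else 0) + v (S.erase j)) - v S * wbar ω p T j
            = if j ∈ S then wbar ω p T j * (v T - v (T.erase j) - v S + v (S.erase j)) else 0 := by
          intro j _
          by_cases h : j ∈ S
          · rw [if_pos h, if_pos h]; ring
          · rw [if_neg h, if_neg h, Finset.erase_eq_of_notMem h]; ring
        rw [Finset.sum_congr rfl e1, Finset.sum_ite_mem, Finset.inter_eq_right.mpr hST]
      linarith [hconv S T hss, key]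
    · exact le_of_eq (eff ω p v hω hv S).symm


end aux

/-- If a TU-game is `(ω,Σ)`-convex, then its `(ω,Σ)`-weighted Shapley value is in the core. -/
theorem weighted_shapley_mem_core [Fintype α] [DecidableEq α]
    (ω : α → ℝ) (hω : ∀ i, 0 < ω i) (p : α → ℕ) (hp : ∀ i, 1 ≤ p i)
    (v : Finset α → ℝ) (hv : v ∅ = 0) (hconv : WConvex ω p v) :
    InCore v (fun i => wShapley ω p v Finset.univ i) := by
  constructor
  · exact eff ω p v hω hv Finset.univ
  · intro S
    exact core_ineq ω p v hω hv hconv Finset.univ S (Finset.subset_univ S)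

end
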